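/- Suppose (Z, T) is independent of (W, C), Z is integrable, β = P(T ≥ W) > 0, and t1 < t2 are reals with g(s) > 0 for all s ∈ [t1, t2). Then the inverse-probability-weighted estimand is unbiased for the target: E[(S(X)/G(X)) · Δ · Z · 1{t1 ≤ X < t2} | T ≥ W] = E[Z · 1{t1 ≤ T < t2}]. In particular, since S(t1) − S(t2) = P(t1 ≤ T < t2), if P(t1 ≤ T < t2) > 0 then E[(S(X)/G(X)) · Δ · Z · 1{t1 ≤ X < t2} | T ≥ W] / (S(t1) − S(t2)) = E[Z | t1 ≤ T < t2]. -/

import Mathlib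

open MeasureTheory ProbabilityTheory

lemma null_frontier (κ : Measure ℝ) : κ {t | κ (Set.Ici t) = 0} = 0 := by
  by_cases h : ∀ t ∈ {t | κ (Set.Ici t) = 0}, ∃ q : ℚ, (q : ℝ) ≤ t ∧ κ (Set.Ici (q : ℝ)) = 0
  · refine measure_mono_null (t := ⋃ q : ℚ, ⋃ _ : κ (Set.Ici (q : ℝ)) = 0, Set.Ici (q : ℝ))
      ?_ ?_
    · intro t ht
      obtain ⟨q, hq1, hq2⟩ := h t ht
      exact Set.mem_iUnion.2 ⟨q, Set.mem_iUnion.2 ⟨hq2, hq1⟩⟩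
    · exact measure_iUnion_null fun q => measure_iUnion_null fun hq => hq
  · push_neg at h
    obtain ⟨t0, ht0, hq0⟩ := h
    refine measure_mono_null
      (t := (⋃ q : ℚ, ⋃ _ : κ (Set.Ici (q : ℝ)) = 0, Set.Ici (q : ℝ)) ∪ {t0}) ?_ ?_
    · intro t ht
      rcases lt_trichotomy t t0 with h1 | h1 | h1
      · obtain ⟨q, hq1, hq2⟩ := exists_rat_btwn h1
        exact absurd (measure_mono_null (Set.Ici_subset_Ici.2 hq1.le) ht) (hq0 q hq2.le)
      · exact Or.inr (by simp [h1])
      · obtain ⟨q, hq1, hq2⟩ := exists_rat_btwn h1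
        exact Or.inl (Set.mem_iUnion.2 ⟨q, Set.mem_iUnion.2
          ⟨measure_mono_null (Set.Ici_subset_Ici.2 hq1.le) ht0, hq2.le⟩⟩)
    · exact measure_union_null
        (measure_iUnion_null fun q => measure_iUnion_null fun hq => hq)
        (measure_mono_null (Set.singleton_subset_iff.2 Set.self_mem_Ici) ht0)

lemma integral_cond_eq' {Ω : Type*} [MeasurableSpace Ω] (μ : Measure Ω) (s : Set Ω)
    (hs : MeasurableSet s) (f : Ω → ℝ) :
    ∫ ω, f ω ∂(μ[|s]) = (μ s).toReal⁻¹ * ∫ ω, Set.indicator s f ω ∂μ := by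
  show ∫ ω, f ω ∂((μ s)⁻¹ • μ.restrict s) = _
  rw [integral_smul_measure, ENNReal.toReal_inv, smul_eq_mul, integral_indicator hs]

/-- Under independence of `(Z, T)` from `(W, C)`, integrability of `Z`,
`β = P(T ≥ W) > 0`, and positivity of `g` on `[t1, t2)`, the inverse-probability-weighted
estimand is unbiased:
`E[(S(X)/G(X)) Δ Z 1{t1 ≤ X < t2} | T ≥ W] = E[Z 1{t1 ≤ T < t2}]`, and consequently
(dividing by `S(t1) − S(t2) = P(t1 ≤ T < t2) > 0`) it identifies `E[Z | t1 ≤ T < t2]`. -/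
theorem ipw_backward_mean_unbiased
    {Ω : Type*} [MeasurableSpace Ω] (μ : Measure Ω) [IsProbabilityMeasure μ]
    (T C W Z : Ω → ℝ) (hT : Measurable T) (hC : Measurable C) (hW : Measurable W)
    (hZmeas : Measurable Z)
    (hindep : IndepFun (fun ω => (Z ω, T ω)) (fun ω => (W ω, C ω)) μ)
    (hZint : Integrable Z μ)
    (S g G : ℝ → ℝ)
    (hS : ∀ t, S t = (μ {ω | t ≤ T ω}).toReal)
    (hg : ∀ t, g t = (μ {ω | W ω ≤ t ∧ t ≤ C ω}).toReal)
    (hβ : 0 < (μ {ω | W ω ≤ T ω}).toReal)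
    (hG : ∀ t, G t = ((μ[|{ω | W ω ≤ T ω}]) {ω | t ≤ min (T ω) (C ω) ∧ W ω ≤ t}).toReal)
    (t1 t2 : ℝ) (h12 : t1 < t2) (hgpos : ∀ s ∈ Set.Ico t1 t2, 0 < g s) :
    (∫ ω, (S (min (T ω) (C ω)) / G (min (T ω) (C ω)))
          * Set.indicator {ω' | T ω' ≤ C ω'} (fun _ => (1 : ℝ)) ω
          * Z ω
          * Set.indicator {ω' | t1 ≤ min (T ω') (C ω') ∧ min (T ω') (C ω') < t2}
              (fun _ => (1 : ℝ)) ω ∂(μ[|{ω | W ω ≤ T ω}]))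
        = ∫ ω, Z ω * Set.indicator {ω' | t1 ≤ T ω' ∧ T ω' < t2} (fun _ => (1 : ℝ)) ω ∂μ
      ∧ (0 < (μ {ω | t1 ≤ T ω ∧ T ω < t2}).toReal →
          (∫ ω, (S (min (T ω) (C ω)) / G (min (T ω) (C ω)))
              * Set.indicator {ω' | T ω' ≤ C ω'} (fun _ => (1 : ℝ)) ω
              * Z ω
              * Set.indicator {ω' | t1 ≤ min (T ω') (C ω') ∧ min (T ω') (C ω') < t2}
                  (fun _ => (1 : ℝ)) ω ∂(μ[|{ω | W ω ≤ T ω}])) / (S t1 - S t2)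
            = ∫ ω, Z ω ∂(μ[|{ω | t1 ≤ T ω ∧ T ω < t2}])) := by
  have hAmeas : MeasurableSet {ω | W ω ≤ T ω} := measurableSet_le hW hT
  set A : Set Ω := {ω | W ω ≤ T ω} with hA_def
  set β' : ℝ := (μ A).toReal with hβ'_def
  have hpZT : Measurable fun ω => (Z ω, T ω) := hZmeas.prodMk hT
  have hpWC : Measurable fun ω => (W ω, C ω) := hW.prodMk hC
  set ν : Measure (ℝ × ℝ) := μ.map (fun ω => (Z ω, T ω)) with hν_def
  set lam : Measure (ℝ × ℝ) := μ.map (fun ω => (W ω, C ω)) with hlam_def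
  have hprod : μ.map (fun ω => ((Z ω, T ω), (W ω, C ω))) = ν.prod lam :=
    (indepFun_iff_map_prod_eq_prod_map_map hpZT.aemeasurable hpWC.aemeasurable).mp hindep
  haveI : IsProbabilityMeasure ν := Measure.isProbabilityMeasure_map hpZT.aemeasurable
  haveI : IsProbabilityMeasure lam := Measure.isProbabilityMeasure_map hpWC.aemeasurable
  -- S facts
  have hSnonneg : ∀ t, 0 ≤ S t := fun t => by rw [hS]; exact ENNReal.toReal_nonneg
  have hSanti : Antitone S := by
    intro a b hab
    rw [hS, hS]
    exact ENNReal.toReal_mono (measure_ne_top _ _)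
      (measure_mono fun ω (h : b ≤ T ω) => le_trans hab h)
  have hSmeas : Measurable S := hSanti.measurable
  -- g facts
  have hglam : ∀ t, (lam {q : ℝ × ℝ | q.1 ≤ t ∧ t ≤ q.2}).toReal = g t := by
    intro t
    have hset : MeasurableSet {q : ℝ × ℝ | q.1 ≤ t ∧ t ≤ q.2} :=
      (measurableSet_le measurable_fst measurable_const).inter
        (measurableSet_le measurable_const measurable_snd)
    rw [hg, hlam_def, Measure.map_apply hpWC hset]
    rfl
  have hgnonneg : ∀ t, 0 ≤ g t := fun t => by rw [hg]; exact ENNReal.toReal_nonneg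
  have hgmeas : Measurable g := by
    have hsm : MeasurableSet {p : ℝ × (ℝ × ℝ) | p.2.1 ≤ p.1 ∧ p.1 ≤ p.2.2} :=
      (measurableSet_le (measurable_snd.fst) measurable_fst).inter
        (measurableSet_le measurable_fst (measurable_snd.snd))
    have h1 : Measurable fun t : ℝ =>
        lam (Prod.mk t ⁻¹' {p : ℝ × (ℝ × ℝ) | p.2.1 ≤ p.1 ∧ p.1 ≤ p.2.2}) :=
      measurable_measure_prodMk_left hsm
    have : g = fun t => (lam (Prod.mk t ⁻¹' {p : ℝ × (ℝ × ℝ) | p.2.1 ≤ p.1 ∧ p.1 ≤ p.2.2})).toReal := by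
      funext t
      rw [← hglam t]
      rfl
    rw [this]
    exact h1.ennreal_toReal
  -- G fact
  have hGfact : ∀ t, G t = β'⁻¹ * (S t * g t) := by
    intro t
    have hBsub : {ω | t ≤ min (T ω) (C ω) ∧ W ω ≤ t} ⊆ A := fun ω h =>
      le_trans h.2 (le_trans h.1 (min_le_left _ _))
    have hBeq : {ω | t ≤ min (T ω) (C ω) ∧ W ω ≤ t} =
        (fun ω => (Z ω, T ω)) ⁻¹' (Set.univ ×ˢ Set.Ici t) ∩
          (fun ω => (W ω, C ω)) ⁻¹' (Set.Iic t ×ˢ Set.Ici t) := by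
      ext ω
      simp only [Set.mem_setOf_eq, Set.mem_inter_iff, Set.mem_preimage, Set.mem_prod,
        Set.mem_univ, Set.mem_Ici, Set.mem_Iic, le_min_iff, true_and]
      tauto
    rw [hG, cond_apply hAmeas, Set.inter_eq_self_of_subset_right hBsub, hBeq,
      hindep.measure_inter_preimage_eq_mul _ _ (MeasurableSet.univ.prod measurableSet_Ici)
        (measurableSet_Iic.prod measurableSet_Ici),
      ENNReal.toReal_mul, ENNReal.toReal_mul, ENNReal.toReal_inv]
    have e1 : (fun ω => (Z ω, T ω)) ⁻¹' (Set.univ ×ˢ Set.Ici t) = {ω | t ≤ T ω} := by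
      ext ω; simp
    have e2 : (fun ω => (W ω, C ω)) ⁻¹' (Set.Iic t ×ˢ Set.Ici t) =
        {ω | W ω ≤ t ∧ t ≤ C ω} := by
      ext ω; simp
    rw [e1, e2, ← hS, ← hg, hβ'_def]
  have hGmeas : Measurable G := by
    have : G = fun t => β'⁻¹ * (S t * g t) := funext hGfact
    rw [this]; exact measurable_const.mul (hSmeas.mul hgmeas)
  have hβ'ne : β' ≠ 0 := ne_of_gt hβ
  set ind : ℝ → ℝ := Set.indicator (Set.Ico t1 t2) (fun _ => (1:ℝ)) with hind_def
  have hindnn : ∀ t, 0 ≤ ind t := fun t => Set.indicator_nonneg (fun _ _ => zero_le_one) t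
  have hindmeas : Measurable ind := measurable_const.indicator measurableSet_Ico
  set c : ℝ × ℝ → ℝ := fun x => (S x.2 / G x.2) * x.1 * ind x.2 with hc_def
  set F : (ℝ × ℝ) × (ℝ × ℝ) → ℝ := fun p =>
    c p.1 * Set.indicator {q : ℝ × ℝ | q.1 ≤ p.1.2 ∧ p.1.2 ≤ q.2} (fun _ => (1:ℝ)) p.2
    with hFdef
  have hcmeas : Measurable c :=
    (((hSmeas.comp measurable_snd).div (hGmeas.comp measurable_snd)).mul measurable_fst).mul
      (hindmeas.comp measurable_snd)
  have hbigset : MeasurableSet {p : (ℝ × ℝ) × (ℝ × ℝ) | p.2.1 ≤ p.1.2 ∧ p.1.2 ≤ p.2.2} :=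
    (measurableSet_le measurable_snd.fst measurable_fst.snd).inter
      (measurableSet_le measurable_fst.snd measurable_snd.snd)
  have hFmeas : Measurable F := by
    have hFe : F = fun p => c p.1 *
        Set.indicator {p' : (ℝ × ℝ) × (ℝ × ℝ) | p'.2.1 ≤ p'.1.2 ∧ p'.1.2 ≤ p'.2.2}
          (fun _ => (1:ℝ)) p := rfl
    rw [hFe]
    exact (hcmeas.comp measurable_fst).mul (measurable_const.indicator hbigset)
  have hsetx : ∀ x2 : ℝ, MeasurableSet {q : ℝ × ℝ | q.1 ≤ x2 ∧ x2 ≤ q.2} := fun x2 =>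
    (measurableSet_le measurable_fst measurable_const).inter
      (measurableSet_le measurable_const measurable_snd)
  have hinner : ∀ x : ℝ × ℝ, ∫ y, F (x, y) ∂lam = c x * g x.2 := by
    intro x
    rw [show (fun y => F (x, y)) = fun y => c x *
        Set.indicator {q : ℝ × ℝ | q.1 ≤ x.2 ∧ x.2 ≤ q.2} (fun _ => (1:ℝ)) y from rfl,
      integral_const_mul, integral_indicator_const (1:ℝ) (hsetx x.2), smul_eq_mul, mul_one,
      measureReal_def, hglam]
  have hinnernorm : ∀ x : ℝ × ℝ, ∫ y, ‖F (x, y)‖ ∂lam = ‖c x‖ * g x.2 := by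
    intro x
    have h1 : (fun y : ℝ × ℝ => ‖F (x, y)‖) = fun y => ‖c x‖ *
        Set.indicator {q : ℝ × ℝ | q.1 ≤ x.2 ∧ x.2 ≤ q.2} (fun _ => (1:ℝ)) y := by
      funext y
      rw [show F (x, y) = c x *
        Set.indicator {q : ℝ × ℝ | q.1 ≤ x.2 ∧ x.2 ≤ q.2} (fun _ => (1:ℝ)) y from rfl,
        norm_mul, Real.norm_of_nonneg (Set.indicator_nonneg (fun _ _ => zero_le_one) y)]
    rw [h1, integral_const_mul, integral_indicator_const (1:ℝ) (hsetx x.2), smul_eq_mul,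
      mul_one, measureReal_def, hglam]
  have hGnonneg : ∀ t, 0 ≤ G t := fun t => by
    rw [hGfact]
    exact mul_nonneg (inv_nonneg.2 hβ.le) (mul_nonneg (hSnonneg t) (hgnonneg t))
  have hSGnonneg : ∀ t, 0 ≤ S t / G t := fun t => div_nonneg (hSnonneg t) (hGnonneg t)
  have hkey : ∀ t : ℝ, S t ≠ 0 → (S t / G t) * ind t * g t = β' * ind t := by
    intro t hSt
    by_cases hmem : t ∈ Set.Ico t1 t2
    · rw [hind_def, Set.indicator_of_mem hmem]
      have hgt : 0 < g t := hgpos t hmem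
      rw [hGfact t]
      field_simp
    · rw [hind_def, Set.indicator_of_notMem hmem]
      ring
  have hbound : ∀ t : ℝ, (S t / G t) * ind t * g t ≤ β' := by
    intro t
    by_cases hSt : S t = 0
    · rw [hSt, zero_div, zero_mul, zero_mul]
      exact hβ.le
    · rw [hkey t hSt]
      by_cases hmem : t ∈ Set.Ico t1 t2
      · rw [hind_def, Set.indicator_of_mem hmem, mul_one]
      · rw [hind_def, Set.indicator_of_notMem hmem, mul_zero]
        exact hβ.le
  have hfst_int : Integrable (fun x : ℝ × ℝ => x.1) ν := by
    rw [hν_def, integrable_map_measure measurable_fst.aestronglyMeasurable hpZT.aemeasurable]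
    exact hZint
  have hFint : Integrable F (ν.prod lam) := by
    rw [integrable_prod_iff hFmeas.aestronglyMeasurable]
    constructor
    · refine ae_of_all _ fun x => ?_
      rw [show (fun y => F (x, y)) = fun y => c x *
        Set.indicator {q : ℝ × ℝ | q.1 ≤ x.2 ∧ x.2 ≤ q.2} (fun _ => (1:ℝ)) y from rfl]
      exact ((integrable_const (1:ℝ)).indicator (hsetx x.2)).const_mul _
    · rw [funext hinnernorm]
      refine Integrable.mono (hfst_int.norm.const_mul β')
        ((hcmeas.norm.mul (hgmeas.comp measurable_snd)).aestronglyMeasurable)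
        (ae_of_all _ fun x => ?_)
      have hcx : ‖c x‖ = (S x.2 / G x.2) * ind x.2 * ‖x.1‖ := by
        rw [hc_def]
        simp only []
        rw [norm_mul, norm_mul, Real.norm_of_nonneg (hSGnonneg x.2),
          Real.norm_of_nonneg (hindnn x.2)]
        ring
      have h1 : ‖c x‖ * g x.2 ≤ β' * ‖x.1‖ := by
        rw [hcx]
        calc (S x.2 / G x.2) * ind x.2 * ‖x.1‖ * g x.2
            = ((S x.2 / G x.2) * ind x.2 * g x.2) * ‖x.1‖ := by ring
          _ ≤ β' * ‖x.1‖ := mul_le_mul_of_nonneg_right (hbound x.2) (norm_nonneg _)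
      rw [Real.norm_of_nonneg (mul_nonneg (norm_nonneg _) (hgnonneg x.2)),
        Real.norm_of_nonneg (mul_nonneg hβ.le (norm_nonneg _))]
      exact h1
  -- a.e. identity
  have hae : ∀ᵐ x ∂ν, c x * g x.2 = β' * (x.1 * ind x.2) := by
    have hnull : (μ.map T) {t : ℝ | (μ.map T) (Set.Ici t) = 0} = 0 := null_frontier _
    obtain ⟨N, hsubN, hNm, hN0⟩ := exists_measurable_superset_of_null hnull
    have hνsnd : ν.map Prod.snd = μ.map T := by
      rw [hν_def, Measure.map_map measurable_snd hpZT]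
      rfl
    have hνN : ν (Prod.snd ⁻¹' N) = 0 := by
      rw [← Measure.map_apply measurable_snd hNm, hνsnd]
      exact hN0
    have hnm : ∀ᵐ x ∂ν, x ∉ Prod.snd ⁻¹' N := measure_eq_zero_iff_ae_notMem.mp hνN
    filter_upwards [hnm] with x hx
    have hSne : S x.2 ≠ 0 := by
      intro h0
      apply hx
      apply hsubN
      show (μ.map T) (Set.Ici x.2) = 0
      rw [Measure.map_apply hT measurableSet_Ici]
      have h1 : (μ {ω | x.2 ≤ T ω}).toReal = 0 := by rw [← hS x.2]; exact h0
      have h2 : μ (T ⁻¹' Set.Ici x.2) = μ {ω | x.2 ≤ T ω} := rfl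
      rw [h2]
      exact ((ENNReal.toReal_eq_zero_iff _).mp h1).resolve_right (measure_ne_top μ _)
    have hcx : c x = S x.2 / G x.2 * x.1 * ind x.2 := rfl
    calc c x * g x.2 = (S x.2 / G x.2 * ind x.2 * g x.2) * x.1 := by rw [hcx]; ring
      _ = (β' * ind x.2) * x.1 := by rw [hkey x.2 hSne]
      _ = β' * (x.1 * ind x.2) := by ring
  -- pointwise identity for the integrand
  have hpt : ∀ ω, Set.indicator A (fun ω' => S (min (T ω') (C ω')) / G (min (T ω') (C ω'))
      * Set.indicator {ω'' | T ω'' ≤ C ω''} (fun _ => (1:ℝ)) ω'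
      * Z ω'
      * Set.indicator {ω'' | t1 ≤ min (T ω'') (C ω'') ∧ min (T ω'') (C ω'') < t2}
          (fun _ => (1:ℝ)) ω') ω
      = F ((Z ω, T ω), (W ω, C ω)) := by
    intro ω
    have hFv : F ((Z ω, T ω), (W ω, C ω)) = (S (T ω) / G (T ω)) * Z ω * ind (T ω) *
        Set.indicator {q : ℝ × ℝ | q.1 ≤ T ω ∧ T ω ≤ q.2} (fun _ => (1:ℝ)) (W ω, C ω) := rfl
    rw [hFv]
    simp only [hind_def, Set.indicator_apply, Set.mem_setOf_eq, Set.mem_Ico, hA_def]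
    by_cases hTC : T ω ≤ C ω
    · have hmin : min (T ω) (C ω) = T ω := min_eq_left hTC
      simp only [hmin]
      rw [if_pos hTC]
      by_cases hA0 : W ω ≤ T ω
      · rw [if_pos hA0, if_pos (⟨hA0, hTC⟩ : W ω ≤ T ω ∧ T ω ≤ C ω)]
        ring
      · rw [if_neg hA0, if_neg (fun h : W ω ≤ T ω ∧ T ω ≤ C ω => hA0 h.1)]
        ring
    · rw [if_neg hTC, if_neg (fun h : W ω ≤ T ω ∧ T ω ≤ C ω => hTC h.2)]
      by_cases hA0 : W ω ≤ T ω
      · rw [if_pos hA0]; ring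
      · rw [if_neg hA0]; ring
  -- Fubini and assembly
  have hstep : ∫ p, F p ∂(ν.prod lam) = β' * ∫ x : ℝ × ℝ, x.1 * ind x.2 ∂ν := by
    rw [integral_prod F hFint, integral_congr_ae (ae_of_all _ hinner),
      integral_congr_ae hae, integral_const_mul]
  have hback : ∫ x : ℝ × ℝ, x.1 * ind x.2 ∂ν
      = ∫ ω, Z ω * Set.indicator {ω' | t1 ≤ T ω' ∧ T ω' < t2} (fun _ => (1:ℝ)) ω ∂μ := by
    have hm : Measurable fun x : ℝ × ℝ => x.1 * ind x.2 :=
      measurable_fst.mul (hindmeas.comp measurable_snd)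
    rw [hν_def, integral_map hpZT.aemeasurable hm.aestronglyMeasurable]
    refine integral_congr_ae (ae_of_all _ fun ω => ?_)
    simp [hind_def, Set.indicator_apply, Set.mem_Ico]
  -- first conjunct
  have hfirst : (∫ ω, (S (min (T ω) (C ω)) / G (min (T ω) (C ω)))
          * Set.indicator {ω' | T ω' ≤ C ω'} (fun _ => (1 : ℝ)) ω
          * Z ω
          * Set.indicator {ω' | t1 ≤ min (T ω') (C ω') ∧ min (T ω') (C ω') < t2}
              (fun _ => (1 : ℝ)) ω ∂(μ[|A]))
      = ∫ ω, Z ω * Set.indicator {ω' | t1 ≤ T ω' ∧ T ω' < t2} (fun _ => (1 : ℝ)) ω ∂μ := by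
    rw [integral_cond_eq' μ A hAmeas]
    have e1 := integral_congr_ae (ae_of_all μ hpt)
    have e2 : ∫ p, F p ∂(ν.prod lam) = ∫ ω, F ((Z ω, T ω), (W ω, C ω)) ∂μ := by
      rw [← hprod]
      exact integral_map (hpZT.prodMk hpWC).aemeasurable hFmeas.aestronglyMeasurable
    rw [e1, ← e2, hstep, hback, ← hβ'_def, ← mul_assoc, inv_mul_cancel₀ hβ'ne, one_mul]
  -- S t1 - S t2
  have hBmeas : MeasurableSet {ω | t1 ≤ T ω ∧ T ω < t2} :=
    (measurableSet_le measurable_const hT).inter (measurableSet_lt hT measurable_const)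
  have hSdiff : S t1 - S t2 = (μ {ω | t1 ≤ T ω ∧ T ω < t2}).toReal := by
    have hdisj : Disjoint {ω | t1 ≤ T ω ∧ T ω < t2} {ω | t2 ≤ T ω} := by
      rw [Set.disjoint_left]
      intro ω h1 h2
      exact absurd h2 (not_le.2 h1.2)
    have hunion : {ω | t1 ≤ T ω} = {ω | t1 ≤ T ω ∧ T ω < t2} ∪ {ω | t2 ≤ T ω} := by
      ext ω
      simp only [Set.mem_setOf_eq, Set.mem_union]
      constructor
      · intro h
        rcases lt_or_ge (T ω) t2 with h' | h'
        · exact Or.inl ⟨h, h'⟩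
        · exact Or.inr h'
      · rintro (⟨h, -⟩ | h)
        · exact h
        · exact le_trans h12.le h
    rw [hS, hS, hunion, measure_union hdisj (measurableSet_le measurable_const hT),
      ENNReal.toReal_add (measure_ne_top _ _) (measure_ne_top _ _)]
    ring
  refine ⟨hfirst, fun _ => ?_⟩
  rw [hfirst, hSdiff, integral_cond_eq' μ _ hBmeas]
  have e3 : ∫ ω, Set.indicator {ω' | t1 ≤ T ω' ∧ T ω' < t2} Z ω ∂μ
      = ∫ ω, Z ω * Set.indicator {ω' | t1 ≤ T ω' ∧ T ω' < t2} (fun _ => (1 : ℝ)) ω ∂μ := by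
    refine integral_congr_ae (ae_of_all _ fun ω => ?_)
    by_cases h : ω ∈ {ω' | t1 ≤ T ω' ∧ T ω' < t2}
    · simp [Set.indicator_of_mem h]
    · simp [Set.indicator_of_notMem h]
  rw [← e3, div_eq_mul_inv, mul_comm]
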